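/- The MacMahon product P(a,b,c) = H(a)H(b)H(c)H(a+b+c)/(H(a+b)H(b+c)H(c+a)) equals the triple product ∏_{i=1}^{a} ∏_{j=1}^{b} ∏_{k=1}^{c} (i+j+k−1)/(i+j+k−2). -/

import Mathlib

/-- The hyperfactorial `H(n) = 0!·1!⋯(n−1)!`. -/
def hyperfac (n : ℕ) : ℕ := ∏ k ∈ Finset.range n, Nat.factorial k

lemma hyperfac_succ (n : ℕ) : hyperfac (n + 1) = hyperfac n * n.factorial := by
  simp [hyperfac, Finset.prod_range_succ]

lemma hyperfac_pos (n : ℕ) : 0 < hyperfac n :=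
  Finset.prod_pos fun k _ => Nat.factorial_pos k

lemma tel1 (m : ℕ) (hm : 1 ≤ m) (b : ℕ) :
    ∏ j ∈ Finset.Icc 1 b, (((m : ℚ) + j) / ((m : ℚ) + j - 1)) = ((m : ℚ) + b) / m := by
  have h1 : (m : ℚ) ≠ 0 := Nat.cast_ne_zero.mpr (by omega)
  induction b with
  | zero => simp [div_self h1]
  | succ b ih =>
    rw [Finset.prod_Icc_succ_top (by omega), ih]
    have h2 : (m : ℚ) + b ≠ 0 := by positivity
    have h3 : (m : ℚ) + (b + 1 : ℕ) - 1 = (m : ℚ) + b := by push_cast; ring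
    rw [h3]
    field_simp

lemma tel2 (b c a : ℕ) :
    ∏ i ∈ Finset.Icc 1 a, (((i : ℚ) + c + b) / ((i : ℚ) + c)) =
      ((a + b + c).factorial * c.factorial : ℚ) /
        ((b + c).factorial * (a + c).factorial : ℚ) := by
  induction a with
  | zero =>
    have h : (((b + c).factorial : ℚ) * (c.factorial : ℚ)) ≠ 0 :=
      mul_ne_zero (Nat.cast_ne_zero.mpr (Nat.factorial_ne_zero _))
        (Nat.cast_ne_zero.mpr (Nat.factorial_ne_zero _))
    simp only [Nat.zero_add, Finset.Icc_eq_empty (by omega : ¬(1:ℕ) ≤ 0),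
      Finset.prod_empty]
    exact (div_self h).symm
  | succ a ih =>
    rw [Finset.prod_Icc_succ_top (by omega), ih]
    have hfb : ((b + c).factorial : ℚ) ≠ 0 := by exact_mod_cast Nat.factorial_ne_zero _
    have hfa : ((a + c).factorial : ℚ) ≠ 0 := by exact_mod_cast Nat.factorial_ne_zero _
    have hc : ((a:ℚ) + 1 + c) ≠ 0 := by positivity
    have e1 : (a + 1 + b + c).factorial = (a + b + c).factorial * (a + b + c + 1) := by
      rw [show a + 1 + b + c = (a + b + c) + 1 from by ring, Nat.factorial_succ]; ring
    have e2 : (a + 1 + c).factorial = (a + c).factorial * (a + c + 1) := by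
      rw [show a + 1 + c = (a + c) + 1 from by ring, Nat.factorial_succ]; ring
    rw [e1, e2]
    have hfa1 : ((a + c + 1 : ℕ) : ℚ) ≠ 0 := Nat.cast_ne_zero.mpr (by omega)
    push_cast
    rw [div_mul_div_comm]
    rw [div_eq_div_iff (by positivity) (by positivity)]
    ring

/-- MacMahon's box formula in product form:
`H(a)H(b)H(c)H(a+b+c)/(H(a+b)H(b+c)H(c+a)) =
 ∏_{i=1}^{a} ∏_{j=1}^{b} ∏_{k=1}^{c} (i+j+k−1)/(i+j+k−2)`. -/
theorem macmahon_product_eq_triple_product (a b c : ℕ) :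
    ((hyperfac a * hyperfac b * hyperfac c * hyperfac (a + b + c) : ℕ) : ℚ) /
        ((hyperfac (a + b) * hyperfac (b + c) * hyperfac (c + a) : ℕ) : ℚ) =
      ∏ i ∈ Finset.Icc 1 a, ∏ j ∈ Finset.Icc 1 b, ∏ k ∈ Finset.Icc 1 c,
        (((i : ℚ) + (j : ℚ) + (k : ℚ) - 1) / ((i : ℚ) + (j : ℚ) + (k : ℚ) - 2)) := by
  induction c with
  | zero =>
    simp only [Nat.add_zero, Nat.zero_add, Finset.Icc_eq_empty (by omega : ¬(1:ℕ) ≤ 0),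
      Finset.prod_empty, Finset.prod_const_one]
    have hnum : hyperfac a * hyperfac b * hyperfac 0 * hyperfac (a + b) =
        hyperfac (a + b) * hyperfac b * hyperfac a := by
      have h0 : hyperfac 0 = 1 := by simp [hyperfac]
      rw [h0]; ring
    rw [hnum, div_self (Nat.cast_ne_zero.mpr (by
      have := hyperfac_pos (a+b); have := hyperfac_pos a; have := hyperfac_pos b
      positivity))]
  | succ c ih =>
    have hR : ∀ i ∈ Finset.Icc 1 a, ∀ j ∈ Finset.Icc 1 b,
        (∏ k ∈ Finset.Icc 1 (c+1),
          (((i : ℚ) + j + k - 1) / ((i : ℚ) + j + k - 2))) =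
        (∏ k ∈ Finset.Icc 1 c,
          (((i : ℚ) + j + k - 1) / ((i : ℚ) + j + k - 2))) *
        (((i:ℚ) + c + j) / ((i:ℚ) + c + j - 1)) := by
      intro i hi j hj
      rw [Finset.prod_Icc_succ_top (by omega)]
      push_cast
      rw [show ((i:ℚ) + j + (c+1) - 1) = (i:ℚ) + c + j from by ring,
        show ((i:ℚ) + j + (c+1) - 2) = (i:ℚ) + c + j - 1 from by ring]
    have inner : ∀ i ∈ Finset.Icc 1 a,
        (∏ j ∈ Finset.Icc 1 b, (((i:ℚ) + c + j) / ((i:ℚ) + c + j - 1))) =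
          ((i:ℚ) + c + b) / ((i:ℚ) + c) := by
      intro i hi
      have hm : 1 ≤ i + c := by simp [Finset.mem_Icc] at hi; omega
      have := tel1 (i + c) hm b
      push_cast at this
      exact this
    have key : (∏ i ∈ Finset.Icc 1 a, ∏ j ∈ Finset.Icc 1 b,
        (((i:ℚ) + c + j) / ((i:ℚ) + c + j - 1))) =
        (((a + b + c).factorial * c.factorial : ℚ)) /
          (((b + c).factorial * (a + c).factorial : ℚ)) := by
      rw [Finset.prod_congr rfl inner]
      exact tel2 b c a
    have hnum : hyperfac a * hyperfac b * hyperfac (c+1) * hyperfac (a + b + (c+1)) =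
        hyperfac a * hyperfac b * hyperfac c * hyperfac (a + b + c) *
          ((a + b + c).factorial * c.factorial) := by
      rw [show a + b + (c+1) = (a+b+c) + 1 from by ring, hyperfac_succ, hyperfac_succ]
      ring
    have hden : hyperfac (a + b) * hyperfac (b + (c+1)) * hyperfac ((c+1) + a) =
        hyperfac (a + b) * hyperfac (b + c) * hyperfac (c + a) *
          ((b + c).factorial * (a + c).factorial) := by
      rw [show b + (c+1) = (b+c) + 1 from by ring, show (c+1) + a = (c+a) + 1 from by ring,
        hyperfac_succ, hyperfac_succ, show a + c = c + a from Nat.add_comm a c]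
      ring
    rw [Finset.prod_congr rfl (fun i hi =>
        Finset.prod_congr rfl (fun j hj => hR i hi j hj)),
      Finset.prod_congr rfl (fun i _ => Finset.prod_mul_distrib),
      Finset.prod_mul_distrib, key, ← ih, hnum, hden]
    push_cast
    rw [div_mul_div_comm]
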